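/- Fix n ≥ 0. Let R = ℤ[λ_1, λ_2, …] be the polynomial ring over ℤ in the indeterminates λ_i (i ≥ 1), let b = (0, 0, …), let μ_m ∈ R be the m-th moment of (b, λ), and put s_k = λ_1λ_2⋯λ_k (s_0 = 1). Then over R: (i) the matrix (μ_{i+j})_{0≤i,j≤n} has SSNF diag(s_0, s_1, s_2, …, s_n); (ii) the matrix (μ_{2i+2j})_{0≤i,j≤n} has SSNF diag(s_0, s_2, s_4, …, s_{2n}); (iii) the matrix (μ_{2i+2j+2})_{0≤i,j≤n} has SSNF diag(s_1, s_3, s_5, …, s_{2n+1}). -/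

import Mathlib

/-- The finite set of Motzkin paths of length `t` (0-indexed heights `ω 0, …, ω t`). -/
def motzkinPaths (t : ℕ) : Finset (Fin (t+1) → ℕ) :=
  (Fintype.piFinset fun _ : Fin (t+1) => Finset.range (t+1)).filter
    (fun ω => ω 0 = 0 ∧ ω (Fin.last t) = 0 ∧
      ∀ i : Fin t, ω i.succ ≤ ω i.castSucc + 1 ∧ ω i.castSucc ≤ ω i.succ + 1)

/-- The weight of a Motzkin path. -/
def motzkinWeight {R : Type*} [CommRing R] (b lam : ℕ → R) {t : ℕ} (ω : Fin (t+1) → ℕ) : R :=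
  ∏ i : Fin t, if ω i.succ = ω i.castSucc then b (ω i.castSucc)
    else if ω i.succ + 1 = ω i.castSucc then lam (ω i.castSucc) else 1

/-- The `t`-th moment of the pair `(b, lam)`. -/
def motzkinMoment {R : Type*} [CommRing R] (b lam : ℕ → R) (t : ℕ) : R :=
  ∑ ω ∈ motzkinPaths t, motzkinWeight b lam ω

/-- `A` has special Smith normal form `diag d` over `R`: `P * A * Q = diagonal d` for some
`P, Q` of determinant `1`, and `d j ∣ d i` whenever `j ≤ i`. -/
def HasSSNF {R : Type*} [CommRing R] {n : ℕ} (A : Matrix (Fin n) (Fin n) R) (d : Fin n → R) :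
    Prop :=
  (∃ P Q : Matrix (Fin n) (Fin n) R, P.det = 1 ∧ Q.det = 1 ∧ P * A * Q = Matrix.diagonal d) ∧
  ∀ i j : Fin n, j ≤ i → d j ∣ d i


/-- Paths from `0` to `k` of length `t`. -/
def pathsTo (t k : ℕ) : Finset (Fin (t+1) → ℕ) :=
  (Fintype.piFinset fun _ : Fin (t+1) => Finset.range (t+1)).filter
    (fun ω => ω 0 = 0 ∧ ω (Fin.last t) = k ∧
      ∀ i : Fin t, ω i.succ ≤ ω i.castSucc + 1 ∧ ω i.castSucc ≤ ω i.succ + 1)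

noncomputable def G {R : Type*} [CommRing R] (b lam : ℕ → R) (t k : ℕ) : R :=
  ∑ ω ∈ pathsTo t k, motzkinWeight b lam ω

variable {R : Type*} [CommRing R] (b lam : ℕ → R)

lemma mem_pathsTo {t k : ℕ} {ω : Fin (t+1) → ℕ} :
    ω ∈ pathsTo t k ↔ (∀ i, ω i < t+1) ∧ ω 0 = 0 ∧ ω (Fin.last t) = k ∧
      ∀ i : Fin t, ω i.succ ≤ ω i.castSucc + 1 ∧ ω i.castSucc ≤ ω i.succ + 1 := by
  simp [pathsTo, Fintype.mem_piFinset, and_assoc]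

lemma height_bound {t k : ℕ} {ω : Fin (t+1) → ℕ} (hω : ω ∈ pathsTo t k) :
    ∀ i : Fin (t+1), ω i ≤ i := by
  rw [mem_pathsTo] at hω
  obtain ⟨-, h0, -, hstep⟩ := hω
  intro i
  obtain ⟨m, hm⟩ := i
  simp only [Fin.val_mk]
  induction m with
  | zero => simpa using Nat.le_of_eq h0
  | succ p ih =>
      have hp : p < t := by omega
      have h1 := (hstep ⟨p, hp⟩).1
      rw [Fin.succ_mk, Fin.castSucc_mk] at h1
      have h2 := ih (by omega)
      omega

lemma pathsTo_eq_empty {t k : ℕ} (h : t < k) : pathsTo t k = ∅ := by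
  ext ω
  simp only [Finset.notMem_empty, iff_false, mem_pathsTo]
  rintro ⟨hb, -, hlast, -⟩
  have := hb (Fin.last t)
  omega

lemma G_eq_zero_of_lt {t k : ℕ} (h : t < k) : G b lam t k = 0 := by
  rw [G, pathsTo_eq_empty h, Finset.sum_empty]

lemma pathsTo_zero (k : ℕ) : pathsTo 0 k = if k = 0 then {fun _ => 0} else ∅ := by
  split_ifs with hk
  · subst hk
    ext ω
    simp only [mem_pathsTo, Finset.mem_singleton]
    constructor
    · rintro ⟨hb, h0, -, -⟩
      funext i
      have := hb i
      omega
    · rintro rfl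
      refine ⟨fun i => by simp, rfl, rfl, fun i => i.elim0⟩
  · ext ω
    simp only [Finset.notMem_empty, iff_false, mem_pathsTo]
    rintro ⟨hb, -, hlast, -⟩
    have := hb (Fin.last 0)
    omega

lemma G_zero (k : ℕ) : G b lam 0 k = if k = 0 then (1 : R) else 0 := by
  rw [G, pathsTo_zero]
  split_ifs with hk
  · simp [motzkinWeight]
  · simp

/-- The weight of a single step from height `h` to height `k`. -/
def sw {R : Type*} [CommRing R] (b lam : ℕ → R) (h k : ℕ) : R :=
  if k = h then b h else if k + 1 = h then lam h else if h + 1 = k then 1 else 0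

lemma sw_eq_zero {h k : ℕ} (hv : ¬(k ≤ h + 1 ∧ h ≤ k + 1)) : sw b lam h k = 0 := by
  unfold sw
  split_ifs <;> first | rfl | omega

lemma weight_snoc {t : ℕ} (ω' : Fin (t+1) → ℕ) (k : ℕ)
    (h1 : k ≤ ω' (Fin.last t) + 1) (h2 : ω' (Fin.last t) ≤ k + 1) :
    motzkinWeight b lam (Fin.snoc ω' k : Fin (t+2) → ℕ)
      = sw b lam (ω' (Fin.last t)) k * motzkinWeight b lam ω' := by
  rw [motzkinWeight, Fin.prod_univ_castSucc, mul_comm, motzkinWeight]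
  congr 1
  · simp only [Fin.succ_last, Fin.snoc_last, Fin.snoc_castSucc]
    unfold sw
    split_ifs <;> first | rfl | omega
  · apply Finset.prod_congr rfl
    intro j _
    simp only [Fin.succ_castSucc, Fin.snoc_castSucc]

lemma G_succ (t k : ℕ) :
    G b lam (t+1) k = ∑ h ∈ Finset.range (t+1), sw b lam h k * G b lam t h := by
  have hrw : ∀ h, sw b lam h k * G b lam t h
      = ∑ ω ∈ pathsTo t h, sw b lam h k * motzkinWeight b lam ω := fun h => Finset.mul_sum _ _ _
  simp only [hrw]
  rw [Finset.sum_sigma']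
  rw [← Finset.sum_filter_of_ne (p := fun p => k ≤ p.1 + 1 ∧ p.1 ≤ k + 1)
    (by
      intro p _ hf
      by_contra hv
      exact hf (by rw [sw_eq_zero b lam hv, zero_mul]))]
  rw [G]
  refine Finset.sum_bij' (fun ω _ => ⟨ω ((Fin.last t).castSucc), Fin.init ω⟩)
    (fun p _ => Fin.snoc p.2 k) ?_ ?_ ?_ ?_ ?_
  · -- membership forward
    intro ω hω
    have hb := height_bound hω
    rw [mem_pathsTo] at hω
    obtain ⟨hrange, h0, hlast, hstep⟩ := hω
    have hvalid := hstep (Fin.last t)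
    rw [Fin.succ_last] at hvalid
    rw [hlast] at hvalid
    simp only [Finset.mem_filter, Finset.mem_sigma, Finset.mem_range]
    refine ⟨⟨?_, ?_⟩, hvalid.1, hvalid.2⟩
    · have := hb ((Fin.last t).castSucc)
      simp only [Fin.coe_castSucc, Fin.val_last] at this
      omega
    · rw [mem_pathsTo]
      refine ⟨?_, ?_, rfl, ?_⟩
      · intro i
        have := hb i.castSucc
        simp only [Fin.init, Fin.coe_castSucc] at this ⊢
        have : ω i.castSucc ≤ (i : ℕ) := this
        have hi : (i : ℕ) < t + 1 := i.isLt
        omega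
      · simp only [Fin.init, Fin.castSucc_zero]
        exact h0
      · intro i
        have := hstep i.castSucc
        simp only [Fin.init, Fin.succ_castSucc] at this ⊢
        exact this
  · -- membership backward
    rintro ⟨h, ω'⟩ hp
    simp only [Finset.mem_filter, Finset.mem_sigma, Finset.mem_range] at hp
    obtain ⟨⟨hh, hω'⟩, hv1, hv2⟩ := hp
    rw [mem_pathsTo] at hω' ⊢
    obtain ⟨hrange, h0, hlast, hstep⟩ := hω'
    refine ⟨?_, ?_, ?_, ?_⟩
    · intro i
      dsimp only
      induction i using Fin.lastCases with
      | last => rw [Fin.snoc_last]; omega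
      | cast j => rw [Fin.snoc_castSucc]; have := hrange j; omega
    · dsimp only
      rw [show (0 : Fin (t+2)) = Fin.castSucc 0 from rfl, Fin.snoc_castSucc]
      exact h0
    · dsimp only
      rw [Fin.snoc_last]
    · intro i
      dsimp only
      induction i using Fin.lastCases with
      | last =>
          simp only [Fin.succ_last, Fin.snoc_last, Fin.snoc_castSucc]
          rw [hlast]
          exact ⟨hv1, hv2⟩
      | cast j =>
          simp only [Fin.succ_castSucc, Fin.snoc_castSucc]
          exact hstep j
  · -- left inverse
    intro ω hω
    have hlast := (mem_pathsTo.mp hω).2.2.1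
    dsimp only
    rw [← hlast]
    exact Fin.snoc_init_self ω
  · -- right inverse
    rintro ⟨h, ω'⟩ hp
    simp only [Finset.mem_filter, Finset.mem_sigma, Finset.mem_range] at hp
    obtain ⟨⟨hh, hω'⟩, -, -⟩ := hp
    rw [mem_pathsTo] at hω'
    dsimp only
    rw [Fin.snoc_castSucc, Fin.init_snoc, hω'.2.2.1]
  · -- weights
    intro ω hω
    obtain ⟨hrange, h0, hlast, hstep⟩ := mem_pathsTo.mp hω
    have hvalid := hstep (Fin.last t)
    rw [Fin.succ_last, hlast] at hvalid
    have hkey := weight_snoc b lam (Fin.init ω) k hvalid.1 hvalid.2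
    have hsn : (Fin.snoc (Fin.init ω) k : Fin (t+2) → ℕ) = ω := by
      rw [← hlast]; exact Fin.snoc_init_self ω
    rw [hsn] at hkey
    exact hkey

lemma G_diag (t : ℕ) : G b lam t t = 1 := by
  induction t with
  | zero => simp [G_zero]
  | succ t ih =>
      rw [G_succ]
      rw [Finset.sum_eq_single t]
      · have : sw b lam t (t+1) = 1 := by
          unfold sw
          split_ifs <;> first | rfl | omega
        rw [this, ih, one_mul]
      · intro h hmem hne
        rw [Finset.mem_range] at hmem
        have : sw b lam h (t+1) = 0 := by
          unfold sw
          split_ifs <;> first | rfl | omega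
        rw [this, zero_mul]
      · intro habs
        exact absurd (Finset.self_mem_range_succ t) habs

lemma G_parity (hb : ∀ m, b m = 0) (t : ℕ) :
    ∀ k, (t + k) % 2 = 1 → G b lam t k = 0 := by
  induction t with
  | zero =>
      intro k hk
      rw [G_zero, if_neg (by omega)]
  | succ t ih =>
      intro k hk
      rw [G_succ]
      apply Finset.sum_eq_zero
      intro h _
      by_cases hpar : (t + h) % 2 = 1
      · rw [ih h hpar, mul_zero]
      · have : sw b lam h k = 0 := by
          unfold sw
          split_ifs with h1 h2 h3
          · exact hb h
          · exfalso; omega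
          · exfalso; omega
          · rfl
        rw [this, zero_mul]

lemma sum_range_eq_of_zero {f : ℕ → R} {M N : ℕ} (hMN : M ≤ N)
    (h0 : ∀ k, M ≤ k → f k = 0) :
    ∑ k ∈ Finset.range N, f k = ∑ k ∈ Finset.range M, f k :=
  (Finset.sum_subset (Finset.range_subset_range.mpr hMN)
    (fun x _ hx => h0 x (by simpa using hx))).symm

variable (s : ℕ → R)

lemma sw_self (h : ℕ) : sw b lam h h = b h := by
  unfold sw; rw [if_pos rfl]

lemma sw_down (h : ℕ) : sw b lam (h+1) h = lam (h+1) := by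
  unfold sw; rw [if_neg (by omega), if_pos rfl]

lemma sw_up (h : ℕ) : sw b lam h (h+1) = 1 := by
  unfold sw; rw [if_neg (by omega), if_neg (by omega), if_pos rfl]

variable (s : ℕ → R) in
lemma sw_symm (hs : ∀ m, s (m+1) = s m * lam (m+1)) (h h' : ℕ) :
    s h * sw b lam h' h = s h' * sw b lam h h' := by
  rcases eq_or_ne h h' with rfl | hne
  · rfl
  rcases eq_or_ne h (h' + 1) with rfl | hne2
  · rw [sw_up, sw_down, hs h', mul_one]
  rcases eq_or_ne h' (h + 1) with rfl | hne3
  · rw [sw_up, sw_down, hs h, mul_one]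
  · rw [sw_eq_zero b lam (by omega), sw_eq_zero b lam (by omega), mul_zero, mul_zero]

lemma G_key (hs : ∀ m, s (m+1) = s m * lam (m+1)) (hs0 : s 0 = 1) :
    ∀ j i : ℕ, G b lam (i + j) 0
      = ∑ k ∈ Finset.range (j + 1), s k * G b lam i k * G b lam j k := by
  intro j
  induction j with
  | zero =>
      intro i
      simp [G_zero, hs0]
  | succ j ih =>
      intro i
      have h1 : i + (j + 1) = (i + 1) + j := by omega
      rw [h1, ih (i + 1)]
      have h2 : ∀ k ∈ Finset.range (j+1),
          s k * G b lam (i+1) k * G b lam j k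
            = ∑ h ∈ Finset.range (i+1), G b lam i h * (s k * sw b lam h k * G b lam j k) := by
        intro k _
        rw [G_succ, Finset.mul_sum, Finset.sum_mul]
        apply Finset.sum_congr rfl
        intro h _
        ring
      rw [Finset.sum_congr rfl h2, Finset.sum_comm]
      have h3 : ∀ h ∈ Finset.range (i+1),
          ∑ k ∈ Finset.range (j+1), G b lam i h * (s k * sw b lam h k * G b lam j k)
            = s h * G b lam i h * G b lam (j+1) h := by
        intro h _
        rw [G_succ, Finset.mul_sum]
        apply Finset.sum_congr rfl
        intro k _
        linear_combination (G b lam i h * G b lam j k) * sw_symm b lam s hs k h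
      rw [Finset.sum_congr rfl h3]
      -- now extend both ranges to range (i + j + 2)
      have hL : ∑ h ∈ Finset.range (i+1), s h * G b lam i h * G b lam (j+1) h
          = ∑ h ∈ Finset.range (i + j + 2), s h * G b lam i h * G b lam (j+1) h :=
        (sum_range_eq_of_zero (by omega)
          (fun k hk => by
            rw [G_eq_zero_of_lt b lam (show i < k by omega), mul_zero, zero_mul])).symm
      have hR : ∑ h ∈ Finset.range (j+1+1), s h * G b lam i h * G b lam (j+1) h
          = ∑ h ∈ Finset.range (i + j + 2), s h * G b lam i h * G b lam (j+1) h :=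
        (sum_range_eq_of_zero (by omega)
          (fun k hk => by
            rw [G_eq_zero_of_lt b lam (show j + 1 < k by omega), mul_zero])).symm
      rw [hL, hR]

lemma sum_range_double {f : ℕ → R} (m : ℕ) :
    ∑ k ∈ Finset.range (2*m), f k = ∑ k ∈ Finset.range m, (f (2*k) + f (2*k+1)) := by
  induction m with
  | zero => simp
  | succ m ih =>
      rw [show 2*(m+1) = (2*m+1)+1 by ring, Finset.sum_range_succ, Finset.sum_range_succ, ih,
        Finset.sum_range_succ]
      rw [add_assoc]

lemma G_key_even (hb : ∀ m, b m = 0) (hs : ∀ m, s (m+1) = s m * lam (m+1)) (hs0 : s 0 = 1)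
    (i j : ℕ) :
    G b lam (2*i + 2*j) 0
      = ∑ k ∈ Finset.range (j+1), s (2*k) * G b lam (2*i) (2*k) * G b lam (2*j) (2*k) := by
  have h := G_key b lam s hs hs0 (2*j) (2*i)
  have hext : ∑ k ∈ Finset.range (2*j+1), s k * G b lam (2*i) k * G b lam (2*j) k
      = ∑ k ∈ Finset.range (2*(j+1)), s k * G b lam (2*i) k * G b lam (2*j) k :=
    (sum_range_eq_of_zero (by omega) (fun k hk => by
      rw [G_eq_zero_of_lt b lam (show 2*j < k by omega), mul_zero])).symm
  rw [h, hext, sum_range_double]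
  apply Finset.sum_congr rfl
  intro k _
  rw [G_parity b lam hb (2*i) (2*k+1) (by omega), mul_zero, zero_mul, add_zero]

lemma G_key_odd (hb : ∀ m, b m = 0) (hs : ∀ m, s (m+1) = s m * lam (m+1)) (hs0 : s 0 = 1)
    (i j : ℕ) :
    G b lam (2*i + 2*j + 2) 0
      = ∑ k ∈ Finset.range (j+1),
          s (2*k+1) * G b lam (2*i+1) (2*k+1) * G b lam (2*j+1) (2*k+1) := by
  have h := G_key b lam s hs hs0 (2*j+1) (2*i+1)
  rw [show 2*i + 2*j + 2 = (2*i+1) + (2*j+1) by ring, h,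
    show 2*j+1+1 = 2*(j+1) by ring, sum_range_double]
  apply Finset.sum_congr rfl
  intro k _
  rw [G_parity b lam hb (2*j+1) (2*k) (by omega), mul_zero, zero_add]

lemma mul_diag_mul_transpose_apply {m : ℕ} (F : Matrix (Fin m) (Fin m) R) (d : Fin m → R)
    (i j : Fin m) :
    (F * Matrix.diagonal d * F.transpose) i j = ∑ k, F i k * d k * F j k := by
  rw [Matrix.mul_apply]
  apply Finset.sum_congr rfl
  intro k _
  rw [Matrix.mul_diagonal, Matrix.transpose_apply]

lemma hasSSNF_of_factor {m : ℕ} (A : Matrix (Fin m) (Fin m) R) (d : Fin m → R)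
    (F : Matrix (Fin m) (Fin m) R) (hF : F.det = 1)
    (hA : F * Matrix.diagonal d * F.transpose = A)
    (hdvd : ∀ i j : Fin m, j ≤ i → d j ∣ d i) : HasSSNF A d := by
  have hu : IsUnit F.det := by rw [hF]; exact isUnit_one
  have hut : IsUnit F.transpose.det := by rw [Matrix.det_transpose, hF]; exact isUnit_one
  constructor
  · refine ⟨F⁻¹, F.transpose⁻¹, ?_, ?_, ?_⟩
    · rw [Matrix.det_nonsing_inv, hF, Ring.inverse_one]
    · rw [Matrix.det_nonsing_inv, Matrix.det_transpose, hF, Ring.inverse_one]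
    · rw [← hA]
      simp only [Matrix.mul_assoc]
      rw [Matrix.mul_nonsing_inv _ hut, Matrix.mul_one,
        Matrix.nonsing_inv_mul_cancel_left _ _ hu]
  · exact hdvd

lemma det_lower {m : ℕ} (F : Matrix (Fin (m+1)) (Fin (m+1)) R)
    (htri : ∀ i j : Fin (m+1), i < j → F i j = 0) (hdiag : ∀ i, F i i = 1) : F.det = 1 := by
  rw [Matrix.det_of_lowerTriangular F (fun i j hij => htri i j (by exact hij))]
  simp [hdiag]

lemma moment_eq_G (t : ℕ) : motzkinMoment b lam t = G b lam t 0 := rfl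

lemma entry1 (hs : ∀ m, s (m+1) = s m * lam (m+1)) (hs0 : s 0 = 1) (n i j : ℕ) (hj : j ≤ n) :
    ∑ k ∈ Finset.range (n+1), s k * G b lam i k * G b lam j k = G b lam (i+j) 0 := by
  rw [G_key b lam s hs hs0 j i]
  exact sum_range_eq_of_zero (by omega) (fun k hk => by
    rw [G_eq_zero_of_lt b lam (show j < k by omega), mul_zero])

lemma entry2 (hb : ∀ m, b m = 0) (hs : ∀ m, s (m+1) = s m * lam (m+1)) (hs0 : s 0 = 1)
    (n i j : ℕ) (hj : j ≤ n) :
    ∑ k ∈ Finset.range (n+1), s (2*k) * G b lam (2*i) (2*k) * G b lam (2*j) (2*k)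
      = G b lam (2*i+2*j) 0 := by
  rw [G_key_even b lam s hb hs hs0 i j]
  exact sum_range_eq_of_zero (by omega) (fun k hk => by
    rw [G_eq_zero_of_lt b lam (show 2*j < 2*k by omega), mul_zero])

lemma entry3 (hb : ∀ m, b m = 0) (hs : ∀ m, s (m+1) = s m * lam (m+1)) (hs0 : s 0 = 1)
    (n i j : ℕ) (hj : j ≤ n) :
    ∑ k ∈ Finset.range (n+1), s (2*k+1) * G b lam (2*i+1) (2*k+1) * G b lam (2*j+1) (2*k+1)
      = G b lam (2*i+2*j+2) 0 := by
  rw [G_key_odd b lam s hb hs hs0 i j]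
  exact sum_range_eq_of_zero (by omega) (fun k hk => by
    rw [G_eq_zero_of_lt b lam (show 2*j+1 < 2*k+1 by omega), mul_zero])

lemma hasSSNF_G (hs : ∀ m, s (m+1) = s m * lam (m+1)) (n : ℕ) (e : ℕ → ℕ) (he : StrictMono e)
    (hdvd : ∀ a c : ℕ, a ≤ c → s a ∣ s c)
    (A : Matrix (Fin (n+1)) (Fin (n+1)) R)
    (hA : ∀ i j : Fin (n+1), A i j
      = ∑ k ∈ Finset.range (n+1), s (e k) * G b lam (e i) (e k) * G b lam (e j) (e k)) :
    HasSSNF A (fun i : Fin (n+1) => s (e (i : ℕ))) := by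
  apply hasSSNF_of_factor _ _ (fun i k : Fin (n+1) => G b lam (e (i : ℕ)) (e (k : ℕ)))
  · apply det_lower
    · intro i k hik
      exact G_eq_zero_of_lt b lam (he (show (i:ℕ) < (k:ℕ) from hik))
    · intro i
      exact G_diag b lam (e (i : ℕ))
  · ext i j
    refine (mul_diag_mul_transpose_apply _ _ i j).trans ?_
    rw [hA i j]
    rw [← Fin.sum_univ_eq_sum_range (fun m => s (e m) * G b lam (e (i:ℕ)) (e m)
      * G b lam (e (j:ℕ)) (e m)) (n+1)]
    apply Finset.sum_congr rfl
    intro k _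
    ring
  · intro i j hij
    exact hdvd (e (j : ℕ)) (e (i : ℕ)) (he.monotone (show (j:ℕ) ≤ (i:ℕ) from hij))

/-- Over `R = ℤ[λ₁, λ₂, …]`, with `b = (0,0,…)`, `μ_m` the moments of
`(b, λ)` and `s_k = λ₁λ₂⋯λ_k`: (i) `(μ_{i+j})` has SSNF `diag(s_0, …, s_n)`;
(ii) `(μ_{2i+2j})` has SSNF `diag(s_0, s_2, …, s_{2n})`;
(iii) `(μ_{2i+2j+2})` has SSNF `diag(s_1, s_3, …, s_{2n+1})`. -/
theorem moment_hankel_SSNF_zero_b (n : ℕ) :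
    let R := MvPolynomial ℕ+ ℤ
    let lam : ℕ → R := fun i => if h : 0 < i then MvPolynomial.X (⟨i, h⟩ : ℕ+) else 0
    let μ : ℕ → R := motzkinMoment (fun _ => (0 : R)) lam
    let s : ℕ → R := fun k => ∏ t ∈ Finset.Icc 1 k, lam t
    HasSSNF (fun i j : Fin (n+1) => μ ((i : ℕ) + (j : ℕ))) (fun i => s (i : ℕ)) ∧
    HasSSNF (fun i j : Fin (n+1) => μ (2 * (i : ℕ) + 2 * (j : ℕ))) (fun i => s (2 * (i : ℕ))) ∧
    HasSSNF (fun i j : Fin (n+1) => μ (2 * (i : ℕ) + 2 * (j : ℕ) + 2))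
      (fun i => s (2 * (i : ℕ) + 1)) := by
  intro R lam μ s
  have hb : ∀ m : ℕ, (fun _ : ℕ => (0:R)) m = 0 := fun _ => rfl
  have hs : ∀ m, s (m+1) = s m * lam (m+1) := by
    intro m
    simp only [s]
    rw [Finset.prod_Icc_succ_top (by omega)]
  have hs0 : s 0 = 1 := by simp [s]
  have hμ : ∀ m, μ m = G (fun _ => (0:R)) lam m 0 := fun m => rfl
  have hdvd : ∀ a c : ℕ, a ≤ c → s a ∣ s c := fun a c h =>
    Finset.prod_dvd_prod_of_subset _ _ lam (Finset.Icc_subset_Icc_right h)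
  refine ⟨?_, ?_, ?_⟩
  · exact hasSSNF_G (fun _ => (0:R)) lam s hs n (fun m => m) strictMono_id hdvd _
      (fun i j => by
        rw [hμ, ← entry1 (fun _ => (0:R)) lam s hs hs0 n (i:ℕ) (j:ℕ) (Fin.is_le j)])
  · exact hasSSNF_G (fun _ => (0:R)) lam s hs n (fun m => 2*m)
      (fun a c h => by simp only []; omega) hdvd _
      (fun i j => by
        rw [hμ, ← entry2 (fun _ => (0:R)) lam s hb hs hs0 n (i:ℕ) (j:ℕ) (Fin.is_le j)])
  · exact hasSSNF_G (fun _ => (0:R)) lam s hs n (fun m => 2*m+1)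
      (fun a c h => by simp only []; omega) hdvd _
      (fun i j => by
        rw [hμ, ← entry3 (fun _ => (0:R)) lam s hb hs hs0 n (i:ℕ) (j:ℕ) (Fin.is_le j)])
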